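/- arXiv:0911.0353 — 3 statements merged into one kernel-verified Lean document; each statement's English description precedes it below -/
import Mathlib

section
/- Let a < T be real numbers and let f : ℝ × ℝ × ℝ × ℝ → ℝ, (t, y, v, z) ↦ f(t, y, v, z), be continuously differentiable. Suppose ỹ ∈ C¹([a,T], ℝ) with ỹ(a) = α is a local extremizer (a local minimizer or local maximizer with respect to the C¹ norm) of the functional J[y] = ∫_a^T f(t, y(t), y'(t), y(T)) dt among all y ∈ C¹([a,T], ℝ) with y(a) = α and y(T) free, and suppose the map t ↦ f_v(t, ỹ(t), ỹ'(t), ỹ(T)) is differentiable on [a,T]. Then (i) d/dt f_v(t, ỹ(t), ỹ'(t), ỹ(T)) = f_y(t, ỹ(t), ỹ'(t), ỹ(T)) for all t ∈ [a,T], and (ii) f_v(T, ỹ(T), ỹ'(T), ỹ(T)) = − ∫_a^T f_z(t, ỹ(t), ỹ'(t), ỹ(T)) dt. -/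
open Set intervalIntegral

/-- Partial derivative of `f (t, y, v, z)` with respect to the second argument `y`. -/
noncomputable def fy (f : ℝ → ℝ → ℝ → ℝ → ℝ) (t y v z : ℝ) : ℝ :=
  deriv (fun s => f t s v z) y

/-- Partial derivative of `f (t, y, v, z)` with respect to the third argument `v`. -/
noncomputable def fv (f : ℝ → ℝ → ℝ → ℝ → ℝ) (t y v z : ℝ) : ℝ :=
  deriv (fun s => f t y s z) v

/-- Partial derivative of `f (t, y, v, z)` with respect to the fourth argument `z`. -/
noncomputable def fz (f : ℝ → ℝ → ℝ → ℝ → ℝ) (t y v z : ℝ) : ℝ :=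
  deriv (fun s => f t y v s) z


lemma fy_eq_fderiv {f : ℝ → ℝ → ℝ → ℝ → ℝ} {t y v z : ℝ}
    (hf : DifferentiableAt ℝ (fun p : ℝ × ℝ × ℝ × ℝ => f p.1 p.2.1 p.2.2.1 p.2.2.2) (t, y, v, z)) :
    fy f t y v z
      = fderiv ℝ (fun p : ℝ × ℝ × ℝ × ℝ => f p.1 p.2.1 p.2.2.1 p.2.2.2) (t, y, v, z)
          (0, 1, 0, 0) := by
  have h1 : HasDerivAt (fun s : ℝ => ((t, s, v, z) : ℝ × ℝ × ℝ × ℝ)) (0, 1, 0, 0) y :=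
    (hasDerivAt_const y t).prodMk ((hasDerivAt_id y).prodMk
      ((hasDerivAt_const y v).prodMk (hasDerivAt_const y z)))
  have h2 : HasDerivAt (fun s : ℝ => f t s v z)
      (fderiv ℝ (fun p : ℝ × ℝ × ℝ × ℝ => f p.1 p.2.1 p.2.2.1 p.2.2.2) (t, y, v, z)
        (0, 1, 0, 0)) y := by have := hf.hasFDerivAt.comp_hasDerivAt y h1; exact this
  simp only [fy, fv, fz]; exact h2.deriv

lemma fv_eq_fderiv {f : ℝ → ℝ → ℝ → ℝ → ℝ} {t y v z : ℝ}
    (hf : DifferentiableAt ℝ (fun p : ℝ × ℝ × ℝ × ℝ => f p.1 p.2.1 p.2.2.1 p.2.2.2) (t, y, v, z)) :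
    fv f t y v z
      = fderiv ℝ (fun p : ℝ × ℝ × ℝ × ℝ => f p.1 p.2.1 p.2.2.1 p.2.2.2) (t, y, v, z)
          (0, 0, 1, 0) := by
  have h1 : HasDerivAt (fun s : ℝ => ((t, y, s, z) : ℝ × ℝ × ℝ × ℝ)) (0, 0, 1, 0) v :=
    (hasDerivAt_const v t).prodMk ((hasDerivAt_const v y).prodMk
      ((hasDerivAt_id v).prodMk (hasDerivAt_const v z)))
  have h2 : HasDerivAt (fun s : ℝ => f t y s z)
      (fderiv ℝ (fun p : ℝ × ℝ × ℝ × ℝ => f p.1 p.2.1 p.2.2.1 p.2.2.2) (t, y, v, z)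
        (0, 0, 1, 0)) v := by have := hf.hasFDerivAt.comp_hasDerivAt v h1; exact this
  simp only [fy, fv, fz]; exact h2.deriv

lemma fz_eq_fderiv {f : ℝ → ℝ → ℝ → ℝ → ℝ} {t y v z : ℝ}
    (hf : DifferentiableAt ℝ (fun p : ℝ × ℝ × ℝ × ℝ => f p.1 p.2.1 p.2.2.1 p.2.2.2) (t, y, v, z)) :
    fz f t y v z
      = fderiv ℝ (fun p : ℝ × ℝ × ℝ × ℝ => f p.1 p.2.1 p.2.2.1 p.2.2.2) (t, y, v, z)
          (0, 0, 0, 1) := by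
  have h1 : HasDerivAt (fun s : ℝ => ((t, y, v, s) : ℝ × ℝ × ℝ × ℝ)) (0, 0, 0, 1) z :=
    (hasDerivAt_const z t).prodMk ((hasDerivAt_const z y).prodMk
      ((hasDerivAt_const z v).prodMk (hasDerivAt_id z)))
  have h2 : HasDerivAt (fun s : ℝ => f t y v s)
      (fderiv ℝ (fun p : ℝ × ℝ × ℝ × ℝ => f p.1 p.2.1 p.2.2.1 p.2.2.2) (t, y, v, z)
        (0, 0, 0, 1)) z := by have := hf.hasFDerivAt.comp_hasDerivAt z h1; exact this
  simp only [fy, fv, fz]; exact h2.deriv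

-- square-integral-zero lemma
lemma eq_zero_of_sq_integral_zero {ψ : ℝ → ℝ} {a T : ℝ} (haT : a < T) (hψ : Continuous ψ)
    (h0 : (∫ t in a..T, (ψ t)^2) = 0) : ∀ t ∈ Icc a T, ψ t = 0 := by
  have hnn : 0 ≤ᵐ[MeasureTheory.volume] fun t => (ψ t)^2 :=
    Filter.Eventually.of_forall fun t => sq_nonneg _
  have hint : IntervalIntegrable (fun t => (ψ t)^2) MeasureTheory.volume a T :=
    (hψ.pow 2).intervalIntegrable a T
  have hiff := intervalIntegral.integral_pos_iff_support_of_nonneg_ae hnn hint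
  have hns : ¬ (0 < MeasureTheory.volume (Function.support (fun t => (ψ t)^2) ∩ Ioc a T)) := by
    intro hpos
    have := hiff.mpr ⟨haT, hpos⟩
    rw [h0] at this
    exact lt_irrefl 0 this
  have hzero : MeasureTheory.volume (Function.support (fun t => (ψ t)^2) ∩ Ioo a T) = 0 := by
    refine MeasureTheory.measure_mono_null (inter_subset_inter_right _ Ioo_subset_Ioc_self) ?_
    by_contra h
    exact hns (pos_iff_ne_zero.mpr h)
  have hopen : IsOpen (Function.support (fun t => (ψ t)^2) ∩ Ioo a T) :=
    ((hψ.pow 2).isOpen_support).inter isOpen_Ioo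
  have hempty := (hopen.measure_eq_zero_iff MeasureTheory.volume).mp hzero
  have heqOn : EqOn ψ 0 (Ioo a T) := by
    intro t ht
    by_contra h
    have hmem : t ∈ Function.support (fun t => (ψ t)^2) ∩ Ioo a T := by
      refine ⟨?_, ht⟩
      simp only [Function.mem_support, ne_eq, pow_eq_zero_iff]
      simpa using h
    rw [hempty] at hmem
    exact hmem
  have := heqOn.closure hψ continuous_const
  rw [closure_Ioo (ne_of_lt haT)] at this
  exact fun t ht => this ht

section FV
variable {f : ℝ → ℝ → ℝ → ℝ → ℝ} {a T α : ℝ} {ytil η : ℝ → ℝ}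

lemma first_variation
    (haT : a < T)
    (hf : ContDiff ℝ 1 (fun p : ℝ × ℝ × ℝ × ℝ => f p.1 p.2.1 p.2.2.1 p.2.2.2))
    (hy : ContDiff ℝ 1 ytil) (hya : ytil a = α)
    (hext : ∃ ε > 0,
      ((∀ y : ℝ → ℝ, ContDiff ℝ 1 y → y a = α →
          (∀ t ∈ Icc a T, |y t - ytil t| < ε ∧ |deriv y t - deriv ytil t| < ε) →
          (∫ t in a..T, f t (y t) (deriv y t) (y T)) ≤
            ∫ t in a..T, f t (ytil t) (deriv ytil t) (ytil T)) ∨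
        (∀ y : ℝ → ℝ, ContDiff ℝ 1 y → y a = α →
          (∀ t ∈ Icc a T, |y t - ytil t| < ε ∧ |deriv y t - deriv ytil t| < ε) →
          (∫ t in a..T, f t (ytil t) (deriv ytil t) (ytil T)) ≤
            ∫ t in a..T, f t (y t) (deriv y t) (y T))))
    (hη : ContDiff ℝ 1 η) (hηa : η a = 0) :
    (∫ t in a..T, (fy f t (ytil t) (deriv ytil t) (ytil T) * η t
      + fv f t (ytil t) (deriv ytil t) (ytil T) * deriv η t
      + fz f t (ytil t) (deriv ytil t) (ytil T) * η T)) = 0 := by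
  classical
  set F4 : ℝ × ℝ × ℝ × ℝ → ℝ := fun p => f p.1 p.2.1 p.2.2.1 p.2.2.2 with hF4def
  have hfd : Differentiable ℝ F4 := hf.differentiable one_ne_zero
  have hfc : Continuous (fderiv ℝ F4) := hf.continuous_fderiv one_ne_zero
  have hyc : Continuous ytil := hy.continuous
  have hy'c : Continuous (deriv ytil) := hy.continuous_deriv le_rfl
  have hηc : Continuous η := hη.continuous
  have hη'c : Continuous (deriv η) := hη.continuous_deriv le_rfl
  set Q : ℝ → ℝ → ℝ × ℝ × ℝ × ℝ := fun s t =>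
    (t, ytil t + s * η t, deriv ytil t + s * deriv η t, ytil T + s * η T) with hQdef
  set w : ℝ → ℝ × ℝ × ℝ × ℝ := fun t => (0, η t, deriv η t, η T) with hwdef
  have hwc : Continuous w :=
    continuous_const.prodMk (hηc.prodMk (hη'c.prodMk continuous_const))
  have hQc : Continuous fun p : ℝ × ℝ => Q p.1 p.2 := by
    apply Continuous.prodMk continuous_snd
    apply Continuous.prodMk
    · exact (hyc.comp continuous_snd).add (continuous_fst.mul (hηc.comp continuous_snd))
    apply Continuous.prodMk
    · exact (hy'c.comp continuous_snd).add (continuous_fst.mul (hη'c.comp continuous_snd))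
    · exact continuous_const.add (continuous_fst.mul continuous_const)
  have hQsc : ∀ s, Continuous fun t => Q s t := fun s =>
    (hQc.comp (Continuous.prodMk_right s))
  set Φ : ℝ → ℝ → ℝ := fun s t => F4 (Q s t) with hΦdef
  set Φ' : ℝ → ℝ → ℝ := fun s t => fderiv ℝ F4 (Q s t) (w t) with hΦ'def
  have hd : ∀ s t : ℝ, HasDerivAt (fun s => Φ s t) (Φ' s t) s := by
    intro s t
    have hq : HasDerivAt (fun s => Q s t) (w t) s := by
      refine (hasDerivAt_const s t).prodMk (HasDerivAt.prodMk ?_ (HasDerivAt.prodMk ?_ ?_))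
      · exact ((hasDerivAt_mul_const (η t)).const_add (ytil t))
      · exact ((hasDerivAt_mul_const (deriv η t)).const_add (deriv ytil t))
      · exact ((hasDerivAt_mul_const (η T)).const_add (ytil T))
    exact (hfd (Q s t)).hasFDerivAt.comp_hasDerivAt s hq
  -- uniform bound on the strip
  have hS : IsCompact ((fun p : ℝ × ℝ => Q p.1 p.2) '' (Icc (-1 : ℝ) 1 ×ˢ Icc a T)) :=
    (isCompact_Icc.prod isCompact_Icc).image hQc
  obtain ⟨C₁, hC₁⟩ := hS.exists_bound_of_continuousOn (hfc.continuousOn)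
  obtain ⟨C₂, hC₂⟩ := isCompact_Icc.exists_bound_of_continuousOn
    (hwc.continuousOn : ContinuousOn w (Icc a T))
  have hbound : ∀ t ∈ uIoc a T, ∀ x ∈ Metric.ball (0:ℝ) 1,
      ‖Φ' x t‖ ≤ (max C₁ 0) * (max C₂ 0) := by
    intro t ht x hx
    have htI : t ∈ Icc a T := by
      rw [uIoc_of_le haT.le] at ht
      exact Ioc_subset_Icc_self ht
    have hxI : x ∈ Icc (-1 : ℝ) 1 := by
      have := mem_ball_zero_iff.mp hx
      constructor <;> [linarith [abs_le.mp this.le]; exact (abs_le.mp this.le).2]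
    have hmem : Q x t ∈ (fun p : ℝ × ℝ => Q p.1 p.2) '' (Icc (-1 : ℝ) 1 ×ˢ Icc a T) :=
      ⟨(x, t), ⟨hxI, htI⟩, rfl⟩
    calc ‖Φ' x t‖ ≤ ‖fderiv ℝ F4 (Q x t)‖ * ‖w t‖ := (fderiv ℝ F4 (Q x t)).le_opNorm _
    _ ≤ (max C₁ 0) * (max C₂ 0) := by
        apply mul_le_mul (le_trans (hC₁ _ hmem) (le_max_left _ _))
          (le_trans (hC₂ t htI) (le_max_left _ _)) (norm_nonneg _)
          (le_trans (norm_nonneg _) (le_trans (hC₁ _ hmem) (le_max_left _ _)))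
  -- apply dominated differentiation
  have key := intervalIntegral.hasDerivAt_integral_of_dominated_loc_of_deriv_le
    (F := Φ) (F' := Φ') (x₀ := (0:ℝ)) (a := a) (b := T)
    (bound := fun _ => (max C₁ 0) * (max C₂ 0)) (μ := MeasureTheory.volume)
    (Metric.ball_mem_nhds 0 one_pos)
    (Filter.Eventually.of_forall fun s =>
      ((hf.continuous.comp (hQsc s)).aestronglyMeasurable).restrict)
    (((hf.continuous.comp (hQsc 0))).intervalIntegrable a T)
    ((((hfc.comp (hQsc 0)).clm_apply hwc)).aestronglyMeasurable).restrict
    (Filter.Eventually.of_forall fun t ht x hx => hbound t ht x hx)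
    (intervalIntegrable_const)
    (Filter.Eventually.of_forall fun t _ x _ => hd x t)
  obtain ⟨-, hg⟩ := key
  -- local extremum
  obtain ⟨ε₀, hε₀, hcase⟩ := hext
  obtain ⟨C₃, hC₃⟩ := isCompact_Icc.exists_bound_of_continuousOn
    (hwc.continuousOn : ContinuousOn w (Icc a T))
  have hC₃0 : (0:ℝ) ≤ C₃ := le_trans (norm_nonneg _) (hC₃ a (left_mem_Icc.mpr haT.le))
  set δ : ℝ := ε₀ / (C₃ + 1) with hδdef
  have hδ : 0 < δ := div_pos hε₀ (by linarith)
  -- the comparison functions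
  have hys : ∀ s : ℝ, ContDiff ℝ 1 (fun t => ytil t + s * η t) :=
    fun s => hy.add (contDiff_const.mul hη)
  have hysd : ∀ s t : ℝ, deriv (fun t => ytil t + s * η t) t
      = deriv ytil t + s * deriv η t := by
    intro s t
    have h1 : HasDerivAt (fun t => ytil t + s * η t) (deriv ytil t + s * deriv η t) t :=
      ((hy.differentiable one_ne_zero t).hasDerivAt).add
        (((hη.differentiable one_ne_zero t).hasDerivAt).const_mul s)
    exact h1.deriv
  have hnorm3 : ∀ t, |η t| ≤ ‖w t‖ ∧ |deriv η t| ≤ ‖w t‖ ∧ |η T| ≤ ‖w t‖ := by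
    intro t
    refine ⟨le_trans (norm_fst_le (w t).2) (norm_snd_le (w t)), ?_, ?_⟩
    · exact le_trans (le_trans (norm_fst_le (w t).2.2) (norm_snd_le (w t).2))
        (norm_snd_le (w t))
    · exact le_trans (le_trans (norm_snd_le (w t).2.2) (norm_snd_le (w t).2))
        (norm_snd_le (w t))
  have hsmul : ∀ s : ℝ, |s| < δ → ∀ c : ℝ, |c| ≤ C₃ → |s * c| < ε₀ := by
    intro s hs c hc
    have h1 : |s * c| = |s| * |c| := abs_mul s c
    have h2 : |s| * |c| ≤ |s| * (C₃ + 1) :=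
      mul_le_mul_of_nonneg_left (by linarith) (abs_nonneg s)
    have h3 : |s| * (C₃ + 1) < δ * (C₃ + 1) :=
      mul_lt_mul_of_pos_right hs (by linarith)
    have h4 : δ * (C₃ + 1) = ε₀ := div_mul_cancel₀ ε₀ (by linarith)
    linarith
  have hclose : ∀ s : ℝ, |s| < δ → ∀ t ∈ Icc a T,
      |(ytil t + s * η t) - ytil t| < ε₀ ∧
      |deriv (fun t => ytil t + s * η t) t - deriv ytil t| < ε₀ := by
    intro s hs t ht
    have hb := hC₃ t ht
    constructor
    · have : ytil t + s * η t - ytil t = s * η t := by ring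
      rw [this]
      exact hsmul s hs _ (le_trans (hnorm3 t).1 hb)
    · rw [hysd]
      have : deriv ytil t + s * deriv η t - deriv ytil t = s * deriv η t := by ring
      rw [this]
      exact hsmul s hs _ (le_trans (hnorm3 t).2.1 hb)
  -- identify the functional with the parametric integral
  have hJg : ∀ s : ℝ,
      (∫ t in a..T, f t (ytil t + s * η t)
        (deriv (fun t => ytil t + s * η t) t) (ytil T + s * η T))
      = ∫ t in a..T, Φ s t := by
    intro s
    apply intervalIntegral.integral_congr
    intro t _
    beta_reduce
    rw [hysd]
  have hg0 : (∫ t in a..T, f t (ytil t) (deriv ytil t) (ytil T))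
      = ∫ t in a..T, Φ 0 t := by
    apply intervalIntegral.integral_congr
    intro t _
    simp [hΦdef, hQdef, hF4def]
  have hval : (∫ t in a..T, Φ' 0 t) = 0 := by
    rcases hcase with hmax | hmin
    · have hloc : IsLocalMax (fun s => ∫ t in a..T, Φ s t) 0 := by
        refine Filter.eventually_of_mem (Metric.ball_mem_nhds 0 hδ) ?_
        intro s hs
        have hs' : |s| < δ := by simpa [Real.norm_eq_abs] using mem_ball_zero_iff.mp hs
        have := hmax (fun t => ytil t + s * η t) (hys s)
          (by simp [hya, hηa]) (hclose s hs')
        simpa only [hJg s, hg0] using this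
      exact hloc.hasDerivAt_eq_zero hg
    · have hloc : IsLocalMin (fun s => ∫ t in a..T, Φ s t) 0 := by
        refine Filter.eventually_of_mem (Metric.ball_mem_nhds 0 hδ) ?_
        intro s hs
        have hs' : |s| < δ := by simpa [Real.norm_eq_abs] using mem_ball_zero_iff.mp hs
        have := hmin (fun t => ytil t + s * η t) (hys s)
          (by simp [hya, hηa]) (hclose s hs')
        simpa only [hJg s, hg0] using this
      exact hloc.hasDerivAt_eq_zero hg
  -- identify the derivative integrand
  have hΦ'0 : ∀ t : ℝ, Φ' 0 t
      = fy f t (ytil t) (deriv ytil t) (ytil T) * η t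
      + fv f t (ytil t) (deriv ytil t) (ytil T) * deriv η t
      + fz f t (ytil t) (deriv ytil t) (ytil T) * η T := by
    intro t
    have hQ0 : Q 0 t = (t, ytil t, deriv ytil t, ytil T) := by
      simp [hQdef]
    have hw : w t = η t • (((0:ℝ),(1:ℝ),(0:ℝ),(0:ℝ)) : ℝ × ℝ × ℝ × ℝ)
        + deriv η t • (((0:ℝ),(0:ℝ),(1:ℝ),(0:ℝ)) : ℝ × ℝ × ℝ × ℝ)
        + η T • (((0:ℝ),(0:ℝ),(0:ℝ),(1:ℝ)) : ℝ × ℝ × ℝ × ℝ) := by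
      simp [hwdef, Prod.ext_iff]
    have hdf : DifferentiableAt ℝ F4 (t, ytil t, deriv ytil t, ytil T) := hfd _
    calc Φ' 0 t = fderiv ℝ F4 (Q 0 t) (w t) := rfl
    _ = fderiv ℝ F4 (t, ytil t, deriv ytil t, ytil T)
          (η t • (((0:ℝ),(1:ℝ),(0:ℝ),(0:ℝ)) : ℝ × ℝ × ℝ × ℝ)
          + deriv η t • (((0:ℝ),(0:ℝ),(1:ℝ),(0:ℝ)) : ℝ × ℝ × ℝ × ℝ)
          + η T • (((0:ℝ),(0:ℝ),(0:ℝ),(1:ℝ)) : ℝ × ℝ × ℝ × ℝ)) := by rw [hQ0, hw]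
    _ = η t * fderiv ℝ F4 (t, ytil t, deriv ytil t, ytil T) ((0:ℝ),(1:ℝ),(0:ℝ),(0:ℝ))
        + deriv η t * fderiv ℝ F4 (t, ytil t, deriv ytil t, ytil T) ((0:ℝ),(0:ℝ),(1:ℝ),(0:ℝ))
        + η T * fderiv ℝ F4 (t, ytil t, deriv ytil t, ytil T) ((0:ℝ),(0:ℝ),(0:ℝ),(1:ℝ)) := by
        rw [map_add, map_add, map_smul, map_smul, map_smul]
        simp only [smul_eq_mul]
    _ = _ := by
        rw [← fy_eq_fderiv hdf, ← fv_eq_fderiv hdf, ← fz_eq_fderiv hdf]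
        ring
  rw [← hval]
  apply intervalIntegral.integral_congr
  intro t _
  exact (hΦ'0 t).symm

end FV


/-- Necessary conditions (Euler–Lagrange equation and new transversality condition)
for a local `C¹` extremizer of `J[y] = ∫_a^T f (t, y t, y' t, y T) dt` with `y a = α`
and `y T` free. -/
theorem nonclassical_necessary_conditions
    (a T α : ℝ) (haT : a < T)
    (f : ℝ → ℝ → ℝ → ℝ → ℝ)
    (hf : ContDiff ℝ 1 (fun p : ℝ × ℝ × ℝ × ℝ => f p.1 p.2.1 p.2.2.1 p.2.2.2))
    (ytil : ℝ → ℝ) (hy : ContDiff ℝ 1 ytil) (hya : ytil a = α)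
    (hFdiff : ∀ t ∈ Icc a T,
      DifferentiableAt ℝ (fun s => fv f s (ytil s) (deriv ytil s) (ytil T)) t)
    (hext : ∃ ε > 0,
      ((∀ y : ℝ → ℝ, ContDiff ℝ 1 y → y a = α →
          (∀ t ∈ Icc a T, |y t - ytil t| < ε ∧ |deriv y t - deriv ytil t| < ε) →
          (∫ t in a..T, f t (y t) (deriv y t) (y T)) ≤
            ∫ t in a..T, f t (ytil t) (deriv ytil t) (ytil T)) ∨
        (∀ y : ℝ → ℝ, ContDiff ℝ 1 y → y a = α →
          (∀ t ∈ Icc a T, |y t - ytil t| < ε ∧ |deriv y t - deriv ytil t| < ε) →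
          (∫ t in a..T, f t (ytil t) (deriv ytil t) (ytil T)) ≤
            ∫ t in a..T, f t (y t) (deriv y t) (y T)))) :
    (∀ t ∈ Icc a T,
      deriv (fun s => fv f s (ytil s) (deriv ytil s) (ytil T)) t
        = fy f t (ytil t) (deriv ytil t) (ytil T)) ∧
    fv f T (ytil T) (deriv ytil T) (ytil T)
      = - ∫ t in a..T, fz f t (ytil t) (deriv ytil t) (ytil T) := by
  classical
  have hfd : Differentiable ℝ (fun p : ℝ × ℝ × ℝ × ℝ => f p.1 p.2.1 p.2.2.1 p.2.2.2) :=
    hf.differentiable one_ne_zero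
  have hfc : Continuous (fderiv ℝ (fun p : ℝ × ℝ × ℝ × ℝ => f p.1 p.2.1 p.2.2.1 p.2.2.2)) :=
    hf.continuous_fderiv one_ne_zero
  have hyc : Continuous ytil := hy.continuous
  have hy'c : Continuous (deriv ytil) := hy.continuous_deriv le_rfl
  have hPc : Continuous (fun t => ((t, ytil t, deriv ytil t, ytil T) : ℝ × ℝ × ℝ × ℝ)) :=
    continuous_id.prodMk (hyc.prodMk (hy'c.prodMk continuous_const))
  set G : ℝ → ℝ := fun t => fy f t (ytil t) (deriv ytil t) (ytil T) with hGdef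
  set F : ℝ → ℝ := fun s => fv f s (ytil s) (deriv ytil s) (ytil T) with hFdef
  set K : ℝ → ℝ := fun t => fz f t (ytil t) (deriv ytil t) (ytil T) with hKdef
  have hGc : Continuous G := by
    have h : G = fun t => fderiv ℝ (fun p : ℝ × ℝ × ℝ × ℝ => f p.1 p.2.1 p.2.2.1 p.2.2.2)
        (t, ytil t, deriv ytil t, ytil T) ((0:ℝ),(1:ℝ),(0:ℝ),(0:ℝ)) := by
      funext t; exact fy_eq_fderiv (hfd _)
    rw [h]; exact (hfc.comp hPc).clm_apply continuous_const
  have hFc : Continuous F := by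
    have h : F = fun t => fderiv ℝ (fun p : ℝ × ℝ × ℝ × ℝ => f p.1 p.2.1 p.2.2.1 p.2.2.2)
        (t, ytil t, deriv ytil t, ytil T) ((0:ℝ),(0:ℝ),(1:ℝ),(0:ℝ)) := by
      funext t; exact fv_eq_fderiv (hfd _)
    rw [h]; exact (hfc.comp hPc).clm_apply continuous_const
  have hKc : Continuous K := by
    have h : K = fun t => fderiv ℝ (fun p : ℝ × ℝ × ℝ × ℝ => f p.1 p.2.1 p.2.2.1 p.2.2.2)
        (t, ytil t, deriv ytil t, ytil T) ((0:ℝ),(0:ℝ),(0:ℝ),(1:ℝ)) := by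
      funext t; exact fz_eq_fderiv (hfd _)
    rw [h]; exact (hfc.comp hPc).clm_apply continuous_const
  set H : ℝ → ℝ := fun t => ∫ u in a..t, G u with hHdef
  have hH : ∀ t : ℝ, HasDerivAt H (G t) t := by
    intro t
    exact intervalIntegral.integral_hasDerivAt_right
      (hGc.intervalIntegrable a t)
      (hGc.stronglyMeasurableAtFilter _ _)
      hGc.continuousAt
  have hHc : Continuous H := by
    rw [continuous_iff_continuousAt]
    exact fun t => (hH t).differentiableAt.continuousAt
  have hHa : H a = 0 := intervalIntegral.integral_same
  -- the master identity
  have hstar : ∀ η : ℝ → ℝ, ContDiff ℝ 1 η → η a = 0 →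
      (H T + ∫ t in a..T, K t) * η T + (∫ t in a..T, (F t - H t) * deriv η t) = 0 := by
    intro η hη hηa
    have hη'c : Continuous (deriv η) := hη.continuous_deriv le_rfl
    have hηc : Continuous η := hη.continuous
    have h1 : (∫ t in a..T, (G t * η t + F t * deriv η t + K t * η T)) = 0 :=
      first_variation haT hf hy hya hext hη hηa
    have iGη : IntervalIntegrable (fun t => G t * η t) MeasureTheory.volume a T :=
      (hGc.mul hηc).intervalIntegrable a T
    have iFη' : IntervalIntegrable (fun t => F t * deriv η t) MeasureTheory.volume a T :=
      (hFc.mul hη'c).intervalIntegrable a T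
    have iHη' : IntervalIntegrable (fun t => H t * deriv η t) MeasureTheory.volume a T :=
      (hHc.mul hη'c).intervalIntegrable a T
    have iKηT : IntervalIntegrable (fun t => K t * η T) MeasureTheory.volume a T :=
      (hKc.mul continuous_const).intervalIntegrable a T
    have hsplit : (∫ t in a..T, (G t * η t + F t * deriv η t + K t * η T))
        = (∫ t in a..T, G t * η t) + (∫ t in a..T, F t * deriv η t)
          + (∫ t in a..T, K t * η T) := by
      rw [intervalIntegral.integral_add (iGη.add iFη') iKηT,
        intervalIntegral.integral_add iGη iFη']
    have hKconst : (∫ t in a..T, K t * η T) = (∫ t in a..T, K t) * η T :=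
      intervalIntegral.integral_mul_const _ _
    have hparts := intervalIntegral.integral_mul_deriv_eq_deriv_mul
      (u := H) (v := η) (u' := G) (v' := deriv η)
      (fun x _ => hH x) (fun x _ => (hη.differentiable one_ne_zero x).hasDerivAt)
      (hGc.intervalIntegrable a T) (hη'c.intervalIntegrable a T)
    rw [hHa, hηa] at hparts
    have hFH : (∫ t in a..T, (F t - H t) * deriv η t)
        = (∫ t in a..T, F t * deriv η t) - (∫ t in a..T, H t * deriv η t) := by
      rw [← intervalIntegral.integral_sub iFη' iHη']
      apply intervalIntegral.integral_congr
      intro t _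
      beta_reduce
      ring
    rw [hsplit, hKconst] at h1
    rw [hFH]
    linarith
  -- du Bois-Reymond argument
  have hTa : T - a ≠ 0 := sub_ne_zero.mpr (ne_of_gt haT)
  set c : ℝ := (∫ u in a..T, (F u - H u)) / (T - a) with hcdef
  set ψ : ℝ → ℝ := fun u => F u - H u - c with hψdef
  have hψc : Continuous ψ := (hFc.sub hHc).sub continuous_const
  have hψint : (∫ u in a..T, ψ u) = 0 := by
    have h1 : (∫ u in a..T, ψ u)
        = (∫ u in a..T, (F u - H u)) - (∫ u in a..T, (c : ℝ)) :=
      intervalIntegral.integral_sub ((hFc.sub hHc).intervalIntegrable a T)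
        intervalIntegrable_const
    rw [h1, intervalIntegral.integral_const, smul_eq_mul, hcdef]
    field_simp
    ring
  set η₀ : ℝ → ℝ := fun t => ∫ u in a..t, ψ u with hη₀def
  have hη₀d : ∀ t : ℝ, HasDerivAt η₀ (ψ t) t := by
    intro t
    exact intervalIntegral.integral_hasDerivAt_right
      (hψc.intervalIntegrable a t)
      (hψc.stronglyMeasurableAtFilter _ _)
      hψc.continuousAt
  have hderiv₀ : deriv η₀ = ψ := funext fun t => (hη₀d t).deriv
  have hη₀C1 : ContDiff ℝ 1 η₀ := by
    rw [contDiff_one_iff_deriv]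
    exact ⟨fun t => (hη₀d t).differentiableAt, by rw [hderiv₀]; exact hψc⟩
  have hη₀a : η₀ a = 0 := intervalIntegral.integral_same
  have hη₀T : η₀ T = 0 := hψint
  have hstar₀ := hstar η₀ hη₀C1 hη₀a
  rw [hη₀T, hderiv₀] at hstar₀
  have hFHψ : (∫ t in a..T, (F t - H t) * ψ t) = 0 := by
    rw [mul_zero, zero_add] at hstar₀
    exact hstar₀
  have hsq : (∫ t in a..T, (ψ t)^2) = 0 := by
    have h1 : (∫ t in a..T, (ψ t)^2)
        = (∫ t in a..T, ((F t - H t) * ψ t)) - (∫ t in a..T, c * ψ t) := by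
      rw [← intervalIntegral.integral_sub (f := fun t => (F t - H t) * ψ t) (g := fun t => c * ψ t)
        (((hFc.sub hHc).mul hψc).intervalIntegrable a T)
        ((continuous_const.mul hψc).intervalIntegrable a T)]
      apply intervalIntegral.integral_congr
      intro t _
      beta_reduce
      simp only [hψdef]
      ring
    have h2 : (∫ t in a..T, c * ψ t) = c * ∫ t in a..T, ψ t :=
      intervalIntegral.integral_const_mul _ _
    rw [h1, hFHψ, h2, hψint, mul_zero, sub_zero]
  have hψ0 : ∀ t ∈ Icc a T, ψ t = 0 := eq_zero_of_sq_integral_zero haT hψc hsq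
  have hFHc : ∀ t ∈ Icc a T, F t = H t + c := by
    intro t ht
    have h := hψ0 t ht
    simp only [hψdef] at h
    linarith
  -- part (i)
  have part1 : ∀ t ∈ Icc a T, deriv F t = G t := by
    intro t ht
    have hud : UniqueDiffWithinAt ℝ (Icc a T) t := uniqueDiffOn_Icc haT t ht
    have h1 : HasDerivWithinAt F (deriv F t) (Icc a T) t :=
      ((hFdiff t ht).hasDerivAt).hasDerivWithinAt
    have h2 : HasDerivWithinAt (fun u => H u + c) (G t) (Icc a T) t :=
      ((hH t).add_const c).hasDerivWithinAt
    have h3 : HasDerivWithinAt F (G t) (Icc a T) t :=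
      h2.congr (fun u hu => hFHc u hu) (hFHc t ht)
    rw [← h1.derivWithin hud]
    exact h3.derivWithin hud
  refine ⟨part1, ?_⟩
  -- part (ii)
  have hη₁C1 : ContDiff ℝ 1 (fun t : ℝ => (t - a) * (T - a)⁻¹) :=
    (contDiff_id.sub contDiff_const).mul contDiff_const
  have hη₁d : ∀ t : ℝ, deriv (fun t : ℝ => (t - a) * (T - a)⁻¹) t = (T - a)⁻¹ := by
    intro t
    have h : HasDerivAt (fun t : ℝ => (t - a) * (T - a)⁻¹) (1 * (T - a)⁻¹) t :=
      ((hasDerivAt_id t).sub_const a).mul_const _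
    simpa using h.deriv
  have hstar₁ := hstar (fun t : ℝ => (t - a) * (T - a)⁻¹) hη₁C1 (by simp)
  have hint1 : (∫ t in a..T, (F t - H t) * deriv (fun t : ℝ => (t - a) * (T - a)⁻¹) t)
      = c := by
    have heq : EqOn (fun t => (F t - H t) * deriv (fun t : ℝ => (t - a) * (T - a)⁻¹) t)
        (fun _ => c * (T - a)⁻¹) (uIcc a T) := by
      intro t ht
      rw [uIcc_of_le haT.le] at ht
      beta_reduce
      rw [hη₁d t]
      have h := hFHc t ht
      rw [h]
      ring
    rw [intervalIntegral.integral_congr heq, intervalIntegral.integral_const, smul_eq_mul]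
    field_simp
  rw [hint1] at hstar₁
  beta_reduce at hstar₁
  have hη₁T : (T - a) * (T - a)⁻¹ = 1 := mul_inv_cancel₀ hTa
  rw [hη₁T, mul_one] at hstar₁
  have hFT : F T = H T + c := hFHc T (right_mem_Icc.mpr haT.le)
  have : F T = - ∫ t in a..T, K t := by linarith
  exact this
end

section
/- Let a < T be real numbers, let f : ℝ × ℝ × ℝ × ℝ → ℝ, (t, y, v, z) ↦ f(t, y, v, z), be continuously differentiable, and let ỹ ∈ C¹([a,T], ℝ) be such that the map t ↦ f_v(t, ỹ(t), ỹ'(t), ỹ(T)) is continuously differentiable on [a,T]. If ∫_a^T [ f_y(t, ỹ(t), ỹ'(t), ỹ(T)) h(t) + f_v(t, ỹ(t), ỹ'(t), ỹ(T)) h'(t) ] dt = 0 for every h ∈ C¹([a,T], ℝ) with h(a) = h(T) = 0, then d/dt f_v(t, ỹ(t), ỹ'(t), ỹ(T)) = f_y(t, ỹ(t), ỹ'(t), ỹ(T)) for all t ∈ [a,T]. -/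
open Set intervalIntegral MeasureTheory

lemma aux_nonpos (a T : ℝ) (haT : a < T) (G : ℝ → ℝ)
    (hG : ContinuousOn G (Icc a T))
    (hint : ∀ h : ℝ → ℝ, ContDiff ℝ 1 h → h a = 0 → h T = 0 →
      (∫ t in a..T, G t * h t) = 0) :
    ∀ t ∈ Ioo a T, G t ≤ 0 := by
  intro t0 ht0
  by_contra hpos
  push_neg at hpos
  have hcont : ContinuousAt G t0 := hG.continuousAt (Icc_mem_nhds ht0.1 ht0.2)
  have hev : ∀ᶠ s in nhds t0, G t0 / 2 < G s ∧ s ∈ Ioo a T := by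
    filter_upwards [hcont.eventually (eventually_gt_nhds (by linarith : G t0 / 2 < G t0)),
      Ioo_mem_nhds ht0.1 ht0.2] with s h1 h2 using ⟨h1, h2⟩
  obtain ⟨δ, hδpos, hδ⟩ := Metric.eventually_nhds_iff_ball.1 hev
  -- ball t0 δ ⊆ Ioo a T and G > G t0 / 2 on it
  have hball : Metric.ball t0 δ ⊆ Ioo a T := fun s hs => (hδ s hs).2
  have hGball : ∀ s ∈ Metric.ball t0 δ, G t0 / 2 < G s := fun s hs => (hδ s hs).1
  let φ : ContDiffBump t0 := ⟨δ/2, δ, by positivity, by linarith⟩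
  have hφa : φ a = 0 := φ.zero_of_le_dist (by
    by_contra hlt; push_neg at hlt
    exact absurd (hball hlt).1 (lt_irrefl a))
  have hφT : φ T = 0 := φ.zero_of_le_dist (by
    by_contra hlt; push_neg at hlt
    exact absurd (hball hlt).2 (lt_irrefl T))
  have hac : a ≤ t0 - δ := by
    by_contra hlt; push_neg at hlt
    have : a ∈ Metric.ball t0 δ := by
      rw [Metric.mem_ball, Real.dist_eq, abs_lt]; constructor <;> [linarith; linarith [ht0.1]]
    exact absurd (hball this).1 (lt_irrefl a)
  have hdT : t0 + δ ≤ T := by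
    by_contra hlt; push_neg at hlt
    have : T ∈ Metric.ball t0 δ := by
      rw [Metric.mem_ball, Real.dist_eq, abs_lt]; constructor <;> [linarith [ht0.2]; linarith]
    exact absurd (hball this).2 (lt_irrefl T)
  set c := t0 - δ/2 with hc
  set d := t0 + δ/2 with hd
  have hsub1 : Icc a c ⊆ Icc a T := Icc_subset_Icc le_rfl (by simp [hc]; linarith)
  have hsub2 : Icc c d ⊆ Icc a T := Icc_subset_Icc (by simp [hc]; linarith) (by simp [hd]; linarith)
  have hsub3 : Icc d T ⊆ Icc a T := Icc_subset_Icc (by simp [hd]; linarith) le_rfl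
  have hGφ : ContinuousOn (fun t => G t * φ t) (Icc a T) := hG.mul φ.continuous.continuousOn
  have hacle : a ≤ c := by simp [hc]; linarith
  have hcdle : c < d := by simp [hc, hd]; linarith
  have hdTle : d ≤ T := by simp [hd]; linarith
  have hI1 : IntervalIntegrable (fun t => G t * φ t) MeasureTheory.volume a c :=
    ContinuousOn.intervalIntegrable (by rw [uIcc_of_le hacle]; exact hGφ.mono hsub1)
  have hI2 : IntervalIntegrable (fun t => G t * φ t) MeasureTheory.volume c d :=
    ContinuousOn.intervalIntegrable (by rw [uIcc_of_le hcdle.le]; exact hGφ.mono hsub2)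
  have hI3 : IntervalIntegrable (fun t => G t * φ t) MeasureTheory.volume d T :=
    ContinuousOn.intervalIntegrable (by rw [uIcc_of_le hdTle]; exact hGφ.mono hsub3)
  -- nonnegativity of the integrand on Icc a T
  have hnn : ∀ u ∈ Icc a T, 0 ≤ G u * φ u := by
    intro u hu
    by_cases hub : u ∈ Metric.ball t0 δ
    · exact mul_nonneg (by linarith [hGball u hub, hpos]) φ.nonneg
    · have : φ u = 0 := φ.zero_of_le_dist (by simpa [Metric.mem_ball, not_lt] using hub)
      simp [this]
  -- the total integral is zero
  have htot : (∫ t in a..T, G t * φ t) = 0 := hint φ φ.contDiff hφa hφT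
  have hsplit1 : (∫ t in a..c, G t * φ t) + (∫ t in c..d, G t * φ t)
      = ∫ t in a..d, G t * φ t := integral_add_adjacent_intervals hI1 hI2
  have hsplit2 : (∫ t in a..d, G t * φ t) + (∫ t in d..T, G t * φ t)
      = ∫ t in a..T, G t * φ t :=
    integral_add_adjacent_intervals (hI1.trans hI2) hI3
  have h1nn : 0 ≤ ∫ t in a..c, G t * φ t :=
    integral_nonneg hacle (fun u hu => hnn u (hsub1 hu))
  have h3nn : 0 ≤ ∫ t in d..T, G t * φ t :=
    integral_nonneg hdTle (fun u hu => hnn u (hsub3 hu))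
  have h2pos : 0 < ∫ t in c..d, G t * φ t := by
    apply intervalIntegral.intervalIntegral_pos_of_pos_on hI2 _ hcdle
    intro x hx
    have hxball : x ∈ Metric.closedBall t0 (δ/2) := by
      rw [Metric.mem_closedBall, Real.dist_eq, abs_le]
      refine ⟨by simp [hc] at hx; linarith [hx.1], by simp [hd] at hx; linarith [hx.2]⟩
    have hφ1 : φ x = 1 := φ.one_of_mem_closedBall hxball
    have : G t0 / 2 < G x := hGball x (Metric.closedBall_subset_ball (by linarith) hxball)
    rw [hφ1]; linarith
  linarith

/-- Euler–Lagrange equation: if the first variation vanishes for all `C¹` variations `h`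
with `h a = h T = 0`, then `d/dt f_v(t, ỹ t, ỹ' t, ỹ T) = f_y(t, ỹ t, ỹ' t, ỹ T)`
on `[a, T]`. -/
theorem euler_lagrange_from_vanishing_first_variation
    (a T : ℝ) (haT : a < T)
    (f : ℝ → ℝ → ℝ → ℝ → ℝ)
    (hf : ContDiff ℝ 1 (fun p : ℝ × ℝ × ℝ × ℝ => f p.1 p.2.1 p.2.2.1 p.2.2.2))
    (ytil : ℝ → ℝ) (hy : ContDiff ℝ 1 ytil)
    (hFdiff : ∀ t ∈ Icc a T,
      DifferentiableAt ℝ (fun s => fv f s (ytil s) (deriv ytil s) (ytil T)) t)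
    (hFcont : ContinuousOn
      (deriv (fun s => fv f s (ytil s) (deriv ytil s) (ytil T))) (Icc a T))
    (hvar : ∀ h : ℝ → ℝ, ContDiff ℝ 1 h → h a = 0 → h T = 0 →
      (∫ t in a..T,
        fy f t (ytil t) (deriv ytil t) (ytil T) * h t
          + fv f t (ytil t) (deriv ytil t) (ytil T) * deriv h t) = 0) :
    ∀ t ∈ Icc a T,
      deriv (fun s => fv f s (ytil s) (deriv ytil s) (ytil T)) t
        = fy f t (ytil t) (deriv ytil t) (ytil T) := by
  have hfy_eq : ∀ t y v z, fy f t y v z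
      = fderiv ℝ (fun p : ℝ × ℝ × ℝ × ℝ => f p.1 p.2.1 p.2.2.1 p.2.2.2) (t, y, v, z)
          (0, 1, 0, 0) := by
    intro t y v z
    have hg : HasDerivAt (fun s : ℝ => ((t, s, v, z) : ℝ × ℝ × ℝ × ℝ))
        ((0 : ℝ), (1 : ℝ), (0 : ℝ), (0 : ℝ)) y :=
      HasDerivAt.prodMk (hasDerivAt_const y t) (HasDerivAt.prodMk (hasDerivAt_id y)
        (HasDerivAt.prodMk (hasDerivAt_const y v) (hasDerivAt_const y z)))
    have hF : HasFDerivAt (fun p : ℝ × ℝ × ℝ × ℝ => f p.1 p.2.1 p.2.2.1 p.2.2.2)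
        (fderiv ℝ (fun p : ℝ × ℝ × ℝ × ℝ => f p.1 p.2.1 p.2.2.1 p.2.2.2) (t, y, v, z))
        (t, y, v, z) := (hf.differentiable one_ne_zero (t, y, v, z)).hasFDerivAt
    exact (hF.comp_hasDerivAt y hg).deriv
  have hfycont : Continuous (fun t => fy f t (ytil t) (deriv ytil t) (ytil T)) := by
    have h1 : Continuous (fun p : ℝ × ℝ × ℝ × ℝ =>
        fderiv ℝ (fun p : ℝ × ℝ × ℝ × ℝ => f p.1 p.2.1 p.2.2.1 p.2.2.2) p (0, 1, 0, 0)) :=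
      (hf.continuous_fderiv one_ne_zero).clm_apply continuous_const
    have h2 : Continuous (fun t : ℝ => ((t, ytil t, deriv ytil t, ytil T) : ℝ × ℝ × ℝ × ℝ)) :=
      continuous_id.prodMk (hy.continuous.prodMk
        ((hy.continuous_deriv le_rfl).prodMk continuous_const))
    simpa [hfy_eq, Function.comp_def] using h1.comp h2
  set F : ℝ → ℝ := fun s => fv f s (ytil s) (deriv ytil s) (ytil T) with hFdef
  set G : ℝ → ℝ := fun t => fy f t (ytil t) (deriv ytil t) (ytil T) - deriv F t with hGdef
  have hGcont : ContinuousOn G (Icc a T) := hfycont.continuousOn.sub hFcont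
  have hFcontOn : ContinuousOn F (Icc a T) :=
    fun t ht => (hFdiff t ht).continuousAt.continuousWithinAt
  have hint : ∀ h : ℝ → ℝ, ContDiff ℝ 1 h → h a = 0 → h T = 0 →
      (∫ t in a..T, G t * h t) = 0 := by
    intro h hh ha hT
    have hhc : Continuous h := hh.continuous
    have hh'c : Continuous (deriv h) := hh.continuous_deriv le_rfl
    have hIF'h : IntervalIntegrable (fun t => deriv F t * h t) volume a T :=
      ContinuousOn.intervalIntegrable
        (by rw [uIcc_of_le haT.le]; exact hFcont.mul hhc.continuousOn)
    have hIFh' : IntervalIntegrable (fun t => F t * deriv h t) volume a T :=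
      ContinuousOn.intervalIntegrable
        (by rw [uIcc_of_le haT.le]; exact hFcontOn.mul hh'c.continuousOn)
    have hIfyh : IntervalIntegrable
        (fun t => fy f t (ytil t) (deriv ytil t) (ytil T) * h t) volume a T :=
      (hfycont.mul hhc).intervalIntegrable _ _
    have hibp : (∫ t in a..T, F t * deriv h t)
        = F T * h T - F a * h a - ∫ t in a..T, deriv F t * h t := by
      apply intervalIntegral.integral_mul_deriv_eq_deriv_mul
      · intro x hx
        rw [uIcc_of_le haT.le] at hx
        exact (hFdiff x hx).hasDerivAt
      · intro x _
        exact (hh.differentiable one_ne_zero x).hasDerivAt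
      · exact ContinuousOn.intervalIntegrable (by rw [uIcc_of_le haT.le]; exact hFcont)
      · exact hh'c.intervalIntegrable _ _
    have hv0 := hvar h hh ha hT
    rw [integral_add hIfyh hIFh'] at hv0
    rw [hibp, ha, hT] at hv0
    have hGsplit : (∫ t in a..T, G t * h t)
        = (∫ t in a..T, fy f t (ytil t) (deriv ytil t) (ytil T) * h t)
          - ∫ t in a..T, deriv F t * h t := by
      rw [← integral_sub hIfyh hIF'h]
      apply integral_congr
      intro t _
      simp [hGdef]; ring
    rw [hGsplit]; linarith
  have hIoo : ∀ t ∈ Ioo a T, G t = 0 := by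
    intro t ht
    have h1 := aux_nonpos a T haT G hGcont hint t ht
    have h2 := aux_nonpos a T haT (fun s => -G s) hGcont.neg
      (fun h hh ha hT => by
        simp only [neg_mul]
        rw [intervalIntegral.integral_neg, hint h hh ha hT, neg_zero]) t ht
    simp only [neg_nonpos] at h2
    linarith
  intro t ht
  have h1 : Filter.Tendsto G (nhdsWithin t (Ioo a T)) (nhds (G t)) :=
    (hGcont t ht).mono Ioo_subset_Icc_self
  have h2 : Filter.Tendsto G (nhdsWithin t (Ioo a T)) (nhds 0) := by
    apply Filter.Tendsto.congr' _ tendsto_const_nhds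
    filter_upwards [self_mem_nhdsWithin] with s hs
    exact (hIoo s hs).symm
  have hne : (nhdsWithin t (Ioo a T)).NeBot := by
    rw [← mem_closure_iff_nhdsWithin_neBot, closure_Ioo haT.ne]
    exact ht
  have hGt : G t = 0 := tendsto_nhds_unique h1 h2
  have : fy f t (ytil t) (deriv ytil t) (ytil T) - deriv F t = 0 := hGt
  linarith
end

section
/- Let c, z ∈ ℝ with c > 2z > 0, set D = √(c² − 4z²), g(t) = c + 2z sin(π t / 10), and h(t) = arctan( (2z + c tan(π t / 20)) / D ). Define y : [0,10) → ℝ by y(t) = 20 ( −arctan(2z / D) · g(t) · c² + h(t) · g(t) · c² − z D ( −c cos(π t / 10) + g(t) ) ) / ( c π D³ g(t) ). Then y(0) = 0 and y is differentiable on [0,10) with y'(t) = (c + 2z sin(π t / 10))^{-2} for every t ∈ [0,10). -/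
open Set Real

/-- The explicit function `y` built from `g`, `h` and `arctan (2 z / D)` satisfies
`y 0 = 0` and is an antiderivative on `[0, 10)` of `u t = (c + 2 z sin (π t / 10))⁻²`,
where `c > 2 z > 0` and `D = √(c² − 4 z²)`. -/
theorem example_state_trajectory_closed_form
    (c z : ℝ) (hz : 0 < z) (hc : 2 * z < c)
    (D : ℝ) (hD : D = Real.sqrt (c ^ 2 - 4 * z ^ 2))
    (g h y : ℝ → ℝ)
    (hg : ∀ t, g t = c + 2 * z * Real.sin (π * t / 10))
    (hh : ∀ t, h t = Real.arctan ((2 * z + c * Real.tan (π * t / 20)) / D))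
    (hy : ∀ t, y t =
      20 * (-(Real.arctan (2 * z / D)) * g t * c ^ 2 + h t * g t * c ^ 2
            - z * D * (-(c * Real.cos (π * t / 10)) + g t))
        / (c * π * D ^ 3 * g t)) :
    y 0 = 0 ∧
    ∀ t ∈ Ico (0 : ℝ) 10,
      HasDerivAt y (((c + 2 * z * Real.sin (π * t / 10)) ^ 2)⁻¹) t := by
  have hc0 : 0 < c := by linarith
  have hsq : 0 < c ^ 2 - 4 * z ^ 2 := by nlinarith
  have hD2 : D ^ 2 = c ^ 2 - 4 * z ^ 2 := by
    rw [hD, Real.sq_sqrt hsq.le]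
  have hDpos : 0 < D := by rw [hD]; exact Real.sqrt_pos.2 hsq
  have hgpos : ∀ s : ℝ, 0 < c + 2 * z * Real.sin (π * s / 10) := by
    intro s
    nlinarith [Real.neg_one_le_sin (π * s / 10)]
  have hyF : y = fun s : ℝ =>
      20 * (-(Real.arctan (2 * z / D)) * (c + 2 * z * Real.sin (π * s / 10)) * c ^ 2
            + Real.arctan ((2 * z + c * Real.tan (π * s / 20)) / D)
                * (c + 2 * z * Real.sin (π * s / 10)) * c ^ 2
            - z * D * (-(c * Real.cos (π * s / 10)) + (c + 2 * z * Real.sin (π * s / 10))))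
        / (c * π * D ^ 3 * (c + 2 * z * Real.sin (π * s / 10))) := by
    funext s
    rw [hy s, hh s, hg s]
  constructor
  · rw [hy 0, hh 0, hg 0]
    norm_num
  · intro t ht
    obtain ⟨ht0, ht10⟩ := ht
    have hpi := Real.pi_pos
    have hcos : 0 < Real.cos (π * t / 20) := by
      apply Real.cos_pos_of_mem_Ioo
      constructor
      · have h1 : 0 ≤ π * t / 20 := by positivity
        linarith
      · have h1 : π * t < π * 10 := by nlinarith
        have h2 : π * t / 20 < π * 10 / 20 := by linarith
        calc π * t / 20 < π * 10 / 20 := h2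
          _ = π / 2 := by ring
    rw [hyF]
    have h1 : HasDerivAt (fun s : ℝ => π * s / 10) (π / 10) t := by
      simpa using ((hasDerivAt_id t).const_mul π).div_const 10
    have h2 : HasDerivAt (fun s : ℝ => π * s / 20) (π / 20) t := by
      simpa using ((hasDerivAt_id t).const_mul π).div_const 20
    have hS := h1.sin
    have hC := h1.cos
    have hT : HasDerivAt (fun s : ℝ => Real.tan (π * s / 20))
        (1 / Real.cos (π * t / 20) ^ 2 * (π / 20)) t := by
      simpa [Function.comp_def] using (Real.hasDerivAt_tan hcos.ne').comp t h2
    have hG : HasDerivAt (fun s : ℝ => c + 2 * z * Real.sin (π * s / 10))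
        (2 * z * (Real.cos (π * t / 10) * (π / 10))) t := (hS.const_mul (2 * z)).const_add c
    have hH0 := (((hT.const_mul c).const_add (2 * z)).div_const D).arctan
    have hgt := hgpos t
    have hHval : 1 / (1 + ((2 * z + c * Real.tan (π * t / 20)) / D) ^ 2)
          * (c * (1 / Real.cos (π * t / 20) ^ 2 * (π / 20)) / D)
        = π / 20 * D / (c + 2 * z * Real.sin (π * t / 10)) := by
      have h2p : π * t / 10 = 2 * (π * t / 20) := by ring
      rw [Real.tan_eq_sin_div_cos, h2p, Real.sin_two_mul]
      have hpyth := Real.sin_sq_add_cos_sq (π * t / 20)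
      have hg' : 0 < c + 2 * z * (2 * Real.sin (π * t / 20) * Real.cos (π * t / 20)) := by
        have := hgpos t; rw [h2p, Real.sin_two_mul] at this; exact this
      have h1x : 0 < 1 + ((2 * z + c * (Real.sin (π * t / 20) / Real.cos (π * t / 20))) / D) ^ 2 := by
        positivity
      field_simp
      rw [eq_div_iff (ne_of_gt (by linarith))]
      linear_combination (-c^2) * hpyth - Real.cos (π*t/20)^2 * hD2
    have hH : HasDerivAt (fun s : ℝ => Real.arctan ((2 * z + c * Real.tan (π * s / 20)) / D))
        (π / 20 * D / (c + 2 * z * Real.sin (π * t / 10))) t := hHval ▸ hH0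
    have hA1 := (hG.const_mul (-(Real.arctan (2 * z / D)))).mul_const (c ^ 2)
    have hA2 := (hH.mul hG).mul_const (c ^ 2)
    have hA3 := ((hC.const_mul c).neg.add hG).const_mul (z * D)
    have hN := (hA1.add hA2).sub hA3
    have hNum := hN.const_mul 20
    have hDen := hG.const_mul (c * π * D ^ 3)
    have hdenne : c * π * D ^ 3 * (c + 2 * z * Real.sin (π * t / 10)) ≠ 0 := by positivity
    have hd := hNum.div hDen hdenne
    refine hd.congr_deriv (Eq.symm ?_)
    rw [eq_comm]
    have hne : (c + 2 * z * Real.sin (π * t / 10)) ≠ 0 := hgt.ne'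
    have hpyth10 := Real.sin_sq_add_cos_sq (π * t / 10)
    simp only [Pi.add_apply, Pi.mul_apply, Pi.neg_apply, Pi.sub_apply]
    field_simp
    linear_combination (-40*c*D*z^2) * hpyth10 - 10*c*D * hD2
end
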